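/- Let M be a non-trivial finite irreducible projection monoid on a finite-dimensional vector space V. Then the sum of the kernels of all projections in M equals V, and the intersection of the images of all projections in M equals 0. -/
import Mathlib


/-- A projection: an idempotent linear endomorphism of nullity 1. -/
def IsProj1 {F V : Type*} [Field F] [AddCommGroup V] [Module F V]
    (p : Module.End F V) : Prop :=
  p * p = p ∧ Module.finrank F (LinearMap.ker p) = 1

/-- If `M` is a non-trivial finite irreducible projection monoid on a
finite-dimensional vector space `V`, then the sum of the kernels of the projections in
`M` is all of `V`, and the intersection of the images of the projections in `M` is `0`. -/
theorem stmt_1 {F V : Type*} [Field F] [AddCommGroup V] [Module F V]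
    [FiniteDimensional F V]
    (M : Submonoid (Module.End F V))
    (hgen : ∃ P : Set (Module.End F V), (∀ p ∈ P, IsProj1 p) ∧ M = Submonoid.closure P)
    (hfin : (M : Set (Module.End F V)).Finite)
    (hnontriv : ∃ m ∈ M, m ≠ 1)
    (hirr : ∀ W : Submodule F V, (∀ m ∈ M, ∀ w ∈ W, m w ∈ W) → W = ⊥ ∨ W = ⊤) :
    (⨆ p ∈ {p : Module.End F V | p ∈ M ∧ IsProj1 p}, LinearMap.ker p) = ⊤ ∧
    (⨅ p ∈ {p : Module.End F V | p ∈ M ∧ IsProj1 p}, LinearMap.range p) = ⊥ := by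
  obtain ⟨P, hP, hMP⟩ := hgen
  -- P is nonempty
  have hPne : P.Nonempty := by
    rcases Set.eq_empty_or_nonempty P with h | h
    · obtain ⟨m, hm, hm1⟩ := hnontriv
      rw [hMP, h, Submonoid.closure_empty, Submonoid.mem_bot] at hm
      exact absurd hm hm1
    · exact h
  obtain ⟨p₀, hp₀⟩ := hPne
  have hp₀M : p₀ ∈ M := hMP ▸ Submonoid.subset_closure hp₀
  have hker₀ : LinearMap.ker p₀ ≠ ⊥ := by
    intro h
    have := (hP p₀ hp₀).2
    rw [h] at this
    simp at this
  set S : Set (Module.End F V) := {p : Module.End F V | p ∈ M ∧ IsProj1 p} with hS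
  set W : Submodule F V := ⨆ p ∈ S, LinearMap.ker p with hW
  set L : Submodule F V := ⨅ p ∈ S, LinearMap.range p with hL
  have hkerW : ∀ p ∈ S, LinearMap.ker p ≤ W := fun p hp =>
    le_iSup₂ (f := fun (p : Module.End F V) (_ : p ∈ S) => LinearMap.ker p) p hp
  -- every element of M acts as identity modulo W
  have hΦ : ∀ m ∈ M, ∀ v : V, m v - v ∈ W := by
    intro m hm
    rw [hMP] at hm
    induction hm using Submonoid.closure_induction with
    | mem p hp =>
        intro v
        have hpM : p ∈ M := hMP ▸ Submonoid.subset_closure hp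
        have hmem : p v - v ∈ LinearMap.ker p := by
          rw [LinearMap.mem_ker, map_sub]
          have h1 : p (p v) = p v := by
            have := congrArg (fun q : Module.End F V => q v) (hP p hp).1
            simpa [Module.End.mul_apply] using this
          rw [h1, sub_self]
        exact hkerW p ⟨hpM, hP p hp⟩ hmem
    | one => intro v; simp
    | mul a b _ _ iha ihb =>
        intro v
        have h1 := iha (b v)
        have h2 := ihb v
        have h3 : (a * b) v - v = (a (b v) - b v) + (b v - v) := by
          simp [Module.End.mul_apply]
        rw [h3]
        exact W.add_mem h1 h2
  -- every element of M fixes L pointwise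
  have hΨ : ∀ m ∈ M, ∀ v ∈ L, m v = v := by
    intro m hm
    rw [hMP] at hm
    induction hm using Submonoid.closure_induction with
    | mem p hp =>
        intro v hv
        have hpM : p ∈ M := hMP ▸ Submonoid.subset_closure hp
        have hvr : v ∈ LinearMap.range p :=
          iInf₂_le (f := fun (p : Module.End F V) (_ : p ∈ S) => LinearMap.range p)
            p ⟨hpM, hP p hp⟩ hv
        obtain ⟨u, hu⟩ := hvr
        have := congrArg (fun q : Module.End F V => q u) (hP p hp).1
        simp only [Module.End.mul_apply] at this
        rw [← hu, this]
    | one => intro v hv; simp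
    | mul a b _ _ iha ihb =>
        intro v hv
        have h2 := ihb v hv
        have h1 := iha v hv
        simp [Module.End.mul_apply, h2, h1]
  constructor
  · -- W = ⊤
    have hinv : ∀ m ∈ M, ∀ w ∈ W, m w ∈ W := by
      intro m hm w hw
      have : m w = (m w - w) + w := by abel
      rw [this]
      exact W.add_mem (hΦ m hm w) hw
    rcases hirr W hinv with h | h
    · exfalso
      apply hker₀
      rw [← le_bot_iff, ← h]
      exact hkerW p₀ ⟨hp₀M, hP p₀ hp₀⟩
    · exact h
  · -- L = ⊥
    have hinv : ∀ m ∈ M, ∀ w ∈ L, m w ∈ L := by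
      intro m hm w hw
      rw [hΨ m hm w hw]
      exact hw
    rcases hirr L hinv with h | h
    · exact h
    · exfalso
      apply hker₀
      rw [eq_bot_iff]
      intro v hv
      have : p₀ v = v := hΨ p₀ hp₀M v (h ▸ Submodule.mem_top)
      rw [LinearMap.mem_ker] at hv
      rw [hv] at this
      simp [← this]
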